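/- arXiv:1701.08383 — 3 statements merged into one kernel-verified Lean document; each statement's English description precedes it below -/
import Mathlib

section
/- Let M be a nonempty finite set of nonnegative real-valued functions on a finite set V with |V| ≥ 2, and let w ∈ V be such that for all m ∈ M, m(w) > (1/(|V|-1)) ∑_{v ≠ w} m(v). Then every covering weight x̄^M (i.e., every weight minimizing x ↦ max_{m ∈ M} ∑_v x(v) m(v)) satisfies x̄^M(w) = 0. -/
theorem covering_weight_vanishes {V : Type*} [Fintype V] [DecidableEq V]
    (hV : 2 ≤ Fintype.card V)
    (M : Finset (V → ℝ)) (hM : M.Nonempty) (hpos : ∀ m ∈ M, ∀ v, 0 ≤ m v)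
    (w : V)
    (hw : ∀ m ∈ M, (1 / ((Fintype.card V : ℝ) - 1)) *
      ∑ v ∈ Finset.univ.erase w, m v < m w)
    (x : V → ℝ) (hx0 : ∀ v, 0 ≤ x v) (hx1 : ∑ v : V, x v = 1)
    (hcov : ∀ y : V → ℝ, (∀ v, 0 ≤ y v) → (∑ v : V, y v = 1) →
      M.sup' hM (fun m => ∑ v : V, x v * m v) ≤
      M.sup' hM (fun m => ∑ v : V, y v * m v)) :
    x w = 0 := by
  by_contra hne
  have hxw : 0 < x w := lt_of_le_of_ne (hx0 w) (Ne.symm hne)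
  set c : ℝ := (Fintype.card V : ℝ) - 1 with hc
  have h2 : (2 : ℝ) ≤ (Fintype.card V : ℝ) := by exact_mod_cast hV
  have hcpos : 0 < c := by rw [hc]; linarith
  set y : V → ℝ := fun v => if v = w then 0 else x v + x w / c with hy
  have hy0 : ∀ v, 0 ≤ y v := by
    intro v
    simp only [hy]
    split
    · exact le_refl 0
    · have := hx0 v
      have : 0 ≤ x w / c := le_of_lt (div_pos hxw hcpos)
      have := hx0 v
      linarith [hx0 v, div_pos hxw hcpos]
  have hcardR : ((Finset.univ.erase w).card : ℝ) = c := by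
    rw [Finset.card_erase_of_mem (Finset.mem_univ w), Finset.card_univ, hc]
    have h1 : 1 ≤ Fintype.card V := by omega
    push_cast [Nat.cast_sub h1]
    ring
  have hsum_erase : ∀ f : V → ℝ, ∑ v : V, f v = (∑ v ∈ Finset.univ.erase w, f v) + f w := by
    intro f
    rw [Finset.sum_erase_add _ _ (Finset.mem_univ w)]
  have key : ∀ f : V → ℝ, ∑ v : V, y v * f v
      = (∑ v : V, x v * f v) - x w * f w + (x w / c) * ∑ v ∈ Finset.univ.erase w, f v := by
    intro f
    rw [hsum_erase (fun v => y v * f v), hsum_erase (fun v => x v * f v)]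
    have hyw : y w = 0 := by simp [hy]
    have : ∑ v ∈ Finset.univ.erase w, y v * f v
        = (∑ v ∈ Finset.univ.erase w, x v * f v)
          + (x w / c) * ∑ v ∈ Finset.univ.erase w, f v := by
      rw [Finset.mul_sum, ← Finset.sum_add_distrib]
      apply Finset.sum_congr rfl
      intro v hv
      have hvw : v ≠ w := Finset.ne_of_mem_erase hv
      simp only [hy, if_neg hvw]
      ring
    rw [this, hyw]
    ring
  have hy1 : ∑ v : V, y v = 1 := by
    have := key (fun _ => 1)
    simp only [mul_one] at this
    rw [this, hx1]
    rw [Finset.sum_const, nsmul_eq_mul, hcardR]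
    field_simp
    ring
  have hlt : M.sup' hM (fun m => ∑ v : V, y v * m v)
      < M.sup' hM (fun m => ∑ v : V, x v * m v) := by
    rw [Finset.sup'_lt_iff]
    intro m hm
    have hgap := hw m hm
    have h1 : ∑ v : V, y v * m v < ∑ v : V, x v * m v := by
      rw [key m]
      have : (x w / c) * ∑ v ∈ Finset.univ.erase w, m v < x w * m w := by
        have := (mul_lt_mul_iff_right₀ hxw).mpr hgap
        calc (x w / c) * ∑ v ∈ Finset.univ.erase w, m v
            = x w * ((1 / c) * ∑ v ∈ Finset.univ.erase w, m v) := by ring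
          _ < x w * m w := this
      linarith
    exact lt_of_lt_of_le h1 (Finset.le_sup' (fun m => ∑ v : V, x v * m v) hm)
  exact absurd (hcov y hy0 hy1) (not_le.mpr hlt)
end

section
/- Let M be a nonempty finite set of histograms on V (each summing to |T|) with |V| ≥ 2, and w ∈ V such that m(w) < |T|/|V| for all m ∈ M. Then every supporting weight for M vanishes at w. -/
set_option maxHeartbeats 1000000 in

theorem supporting_weight_vanishes_hist {V : Type*} [Fintype V] [DecidableEq V]
    (hV : 2 ≤ Fintype.card V) (Tcard : ℕ)
    (M : Finset (V → ℕ)) (hM : M.Nonempty)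
    (hhist : ∀ m ∈ M, ∑ v : V, m v = Tcard)
    (w : V)
    (hw : ∀ m ∈ M, (m w : ℝ) < (Tcard : ℝ) / (Fintype.card V : ℝ))
    (x : V → ℝ) (hx0 : ∀ v, 0 ≤ x v) (hx1 : ∑ v : V, x v = 1)
    (hsupp : ∀ y : V → ℝ, (∀ v, 0 ≤ y v) → (∑ v : V, y v = 1) →
      M.inf' hM (fun m => ∑ v : V, y v * (m v : ℝ)) ≤
      M.inf' hM (fun m => ∑ v : V, x v * (m v : ℝ))) :
    x w = 0 := by
  by_contra hxw0
  have hxw : 0 < x w := lt_of_le_of_ne (hx0 w) (Ne.symm hxw0)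
  have hnpos : 0 < Fintype.card V := lt_of_lt_of_le (by norm_num) hV
  have hn0 : (0:ℝ) < (Fintype.card V : ℝ) := Nat.cast_pos.mpr hnpos
  set c := M.inf' hM (fun m => ∑ v : V, x v * (m v : ℝ)) with hc
  have huni : ∀ m ∈ M, ∑ v : V, ((Fintype.card V : ℝ)⁻¹) * (m v : ℝ)
      = (Tcard : ℝ) / (Fintype.card V : ℝ) := by
    intro m hm
    rw [← Finset.mul_sum, ← Nat.cast_sum, hhist m hm]
    rw [div_eq_inv_mul]
  have hcge : (Tcard : ℝ) / (Fintype.card V : ℝ) ≤ c := by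
    have hs := hsupp (fun _ => (Fintype.card V : ℝ)⁻¹) (fun v => by positivity)
      (by
        rw [Finset.sum_const, Finset.card_univ, nsmul_eq_mul]
        field_simp)
    calc (Tcard : ℝ) / (Fintype.card V : ℝ)
        = M.inf' hM (fun m => ∑ v : V, (Fintype.card V : ℝ)⁻¹ * (m v : ℝ)) := by
          obtain ⟨m0, hm0, heq⟩ := Finset.exists_mem_eq_inf' hM
            (fun m => ∑ v : V, (Fintype.card V : ℝ)⁻¹ * (m v : ℝ))
          rw [heq, huni m0 hm0]
      _ ≤ c := hs
  have hc0 : (0:ℝ) ≤ c := le_trans (by positivity) hcge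
  have hmw : ∀ m ∈ M, (m w : ℝ) < c := fun m hm => lt_of_lt_of_le (hw m hm) hcge
  have hxle : ∀ m ∈ M, c ≤ ∑ v : V, x v * (m v : ℝ) := fun m hm =>
    Finset.inf'_le (fun m => ∑ v : V, x v * (m v : ℝ)) hm
  -- x w < 1
  have hxw1 : x w < 1 := by
    by_contra hge
    push_neg at hge
    have hxwe : x w = 1 := le_antisymm
      (by calc x w ≤ ∑ v : V, x v :=
            Finset.single_le_sum (fun v _ => hx0 v) (Finset.mem_univ w)
        _ = 1 := hx1) hge
    have hsum0 : ∑ u ∈ Finset.univ.erase w, x u = 0 := by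
      have h := Finset.sum_erase_add Finset.univ x (Finset.mem_univ w)
      rw [hx1, hxwe] at h
      linarith
    have hzero : ∀ v, v ≠ w → x v = 0 := by
      intro v hv
      exact (Finset.sum_eq_zero_iff_of_nonneg (fun u _ => hx0 u)).1 hsum0 v
        (Finset.mem_erase.mpr ⟨hv, Finset.mem_univ v⟩)
    obtain ⟨m0, hm0⟩ := hM
    have heq : ∑ v : V, x v * (m0 v : ℝ) = (m0 w : ℝ) := by
      rw [← Finset.sum_erase_add _ _ (Finset.mem_univ w), hxwe,
        Finset.sum_eq_zero (fun v hv => by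
          rw [hzero v (Finset.mem_erase.1 hv).1]; ring)]
      ring
    have := hxle m0 hm0
    rw [heq] at this
    exact absurd this (not_le.mpr (hmw m0 hm0))
  have hd : 0 < 1 - x w := by linarith
  set y : V → ℝ := fun v => if v = w then 0 else x v / (1 - x w) with hy
  have hy0 : ∀ v, 0 ≤ y v := by
    intro v
    simp only [hy]
    split
    · exact le_refl 0
    · exact div_nonneg (hx0 v) (le_of_lt hd)
  have hysum : ∑ v : V, y v = 1 := by
    have h := Finset.sum_erase_add Finset.univ x (Finset.mem_univ w)
    rw [hx1] at h
    rw [← Finset.sum_erase_add _ _ (Finset.mem_univ w)]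
    simp only [hy, if_pos rfl]
    rw [Finset.sum_congr rfl (fun v hv => by
      rw [if_neg (Finset.mem_erase.1 hv).1]), ← Finset.sum_div]
    have : ∑ u ∈ Finset.univ.erase w, x u = 1 - x w := by linarith
    rw [this]
    field_simp
    norm_num
  have hygt : ∀ m ∈ M, c < ∑ v : V, y v * (m v : ℝ) := by
    intro m hm
    have hsx := hxle m hm
    have hmwc := hmw m hm
    have hsplit : ∑ v : V, x v * (m v : ℝ)
        = (∑ u ∈ Finset.univ.erase w, x u * (m u : ℝ)) + x w * (m w : ℝ) :=
      (Finset.sum_erase_add _ _ (Finset.mem_univ w)).symm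
    have hys : ∑ v : V, y v * (m v : ℝ)
        = (∑ u ∈ Finset.univ.erase w, x u * (m u : ℝ)) / (1 - x w) := by
      rw [← Finset.sum_erase_add _ _ (Finset.mem_univ w), Finset.sum_div]
      simp only [hy, if_pos rfl, zero_mul, add_zero]
      apply Finset.sum_congr rfl
      intro v hv
      rw [if_neg (Finset.mem_erase.1 hv).1]
      ring
    rw [hys]
    rw [lt_div_iff₀ hd]
    have : x w * (m w : ℝ) < x w * c := by
      exact (mul_lt_mul_iff_right₀ hxw).mpr hmwc
    linarith [hsx, hsplit, this]
  have hfin := hsupp y hy0 hysum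
  have : c < M.inf' hM (fun m => ∑ v : V, y v * (m v : ℝ)) :=
    (Finset.lt_inf'_iff hM).mpr hygt
  linarith
end

section
/- Let M be a nonempty finite set of histograms on V (each summing to |T|) with |V| ≥ 2, and w ∈ V such that m(w) > |T|/|V| for all m ∈ M. Then every covering weight for M vanishes at w. -/
theorem covering_weight_vanishes_hist {V : Type*} [Fintype V] [DecidableEq V]
    (hV : 2 ≤ Fintype.card V) (Tcard : ℕ)
    (M : Finset (V → ℕ)) (hM : M.Nonempty)
    (hhist : ∀ m ∈ M, ∑ v : V, m v = Tcard)
    (w : V)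
    (hw : ∀ m ∈ M, (Tcard : ℝ) / (Fintype.card V : ℝ) < (m w : ℝ))
    (x : V → ℝ) (hx0 : ∀ v, 0 ≤ x v) (hx1 : ∑ v : V, x v = 1)
    (hcov : ∀ y : V → ℝ, (∀ v, 0 ≤ y v) → (∑ v : V, y v = 1) →
      M.sup' hM (fun m => ∑ v : V, x v * (m v : ℝ)) ≤
      M.sup' hM (fun m => ∑ v : V, y v * (m v : ℝ))) :
    x w = 0 := by
  by_contra hxw
  have hxwpos : 0 < x w := lt_of_le_of_ne (hx0 w) (Ne.symm hxw)
  have hn2 : (2:ℝ) ≤ (Fintype.card V : ℝ) := by exact_mod_cast hV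
  have hnpos : (0:ℝ) < (Fintype.card V : ℝ) - 1 := by linarith
  set c := x w / ((Fintype.card V : ℝ) - 1) with hc
  have hcpos : 0 < c := div_pos hxwpos hnpos
  set y : V → ℝ := fun v => if v = w then 0 else x v + c with hy
  have hy0 : ∀ v, 0 ≤ y v := by
    intro v; simp only [hy]
    split
    · exact le_refl 0
    · have := hx0 v; linarith
  have hcarde : ((Finset.univ.erase w).card : ℝ) = (Fintype.card V : ℝ) - 1 := by
    rw [Finset.card_erase_of_mem (Finset.mem_univ w), Finset.card_univ]
    have : 1 ≤ Fintype.card V := by omega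
    push_cast [this]
    ring
  have hsplit : ∀ f : V → ℝ, ∑ v ∈ Finset.univ.erase w, f v = (∑ v : V, f v) - f w := by
    intro f
    rw [Finset.sum_erase_eq_sub (Finset.mem_univ w)]
  have hy1 : ∑ v : V, y v = 1 := by
    have h1 : ∑ v : V, y v = ∑ v ∈ Finset.univ.erase w, (x v + c) := by
      rw [← Finset.add_sum_erase _ y (Finset.mem_univ w)]
      simp only [hy, if_pos rfl, zero_add]
      exact Finset.sum_congr rfl (fun v hv => by
        simp [Finset.mem_erase.mp hv |>.1])
    rw [h1, Finset.sum_add_distrib, hsplit, hx1, Finset.sum_const, nsmul_eq_mul, hcarde]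
    rw [hc]
    field_simp
    ring
  have key : ∀ m ∈ M, ∑ v : V, y v * (m v : ℝ) < ∑ v : V, x v * (m v : ℝ) := by
    intro m hm
    have h1 : ∑ v : V, y v * (m v : ℝ) =
        ∑ v ∈ Finset.univ.erase w, (x v + c) * (m v : ℝ) := by
      rw [← Finset.add_sum_erase _ (fun v => y v * (m v : ℝ)) (Finset.mem_univ w)]
      simp only [hy, if_pos rfl, zero_mul, zero_add]
      exact Finset.sum_congr rfl (fun v hv => by
        simp [Finset.mem_erase.mp hv |>.1])
    have hsm : ∑ v ∈ Finset.univ.erase w, (m v : ℝ) = (Tcard : ℝ) - (m w : ℝ) := by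
      rw [hsplit]
      rw [← Nat.cast_sum, hhist m hm]
    have h2 : ∑ v : V, y v * (m v : ℝ) =
        (∑ v : V, x v * (m v : ℝ)) - x w * (m w : ℝ) + c * ((Tcard : ℝ) - (m w : ℝ)) := by
      rw [h1]
      have : ∀ v ∈ Finset.univ.erase w, (x v + c) * (m v : ℝ)
          = x v * (m v : ℝ) + c * (m v : ℝ) := fun v _ => by ring
      rw [Finset.sum_congr rfl this, Finset.sum_add_distrib, hsplit, ← Finset.mul_sum, hsm]
    rw [h2]
    have hmw := hw m hm
    have hT : (Tcard : ℝ) < (Fintype.card V : ℝ) * (m w : ℝ) := by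
      rw [div_lt_iff₀ (by linarith : (0:ℝ) < (Fintype.card V : ℝ))] at hmw
      linarith
    have : c * ((Tcard : ℝ) - (m w : ℝ)) < x w * (m w : ℝ) := by
      rw [hc, div_mul_eq_mul_div, div_lt_iff₀ hnpos]
      nlinarith
    linarith
  have hlt : M.sup' hM (fun m => ∑ v : V, y v * (m v : ℝ)) <
      M.sup' hM (fun m => ∑ v : V, x v * (m v : ℝ)) := by
    rw [Finset.sup'_lt_iff]
    intro m hm
    exact lt_of_lt_of_le (key m hm) (Finset.le_sup' (fun m => ∑ v : V, x v * (m v : ℝ)) hm)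
  exact absurd (hcov y hy0 hy1) (not_le.mpr hlt)
end
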